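/- The modified Erdős–Ginzburg–Ziv constant s'_{nt}(ℤ/nℤ) equals (t+1)n - ℓ + 1, where ℓ is the smallest positive integer not dividing n. -/

import Mathlib

private lemma msum_card {α : Type*} (M : Multiset (Multiset α)) :
    Multiset.card M.sum = (M.map Multiset.card).sum := by
  induction M using Multiset.induction with
  | empty => simp
  | cons a s ih => simp [ih]

private lemma msum_sum {α : Type*} [AddCommMonoid α] (M : Multiset (Multiset α)) :
    M.sum.sum = (M.map Multiset.sum).sum := by
  induction M using Multiset.induction with
  | empty => simp
  | cons a s ih => simp [ih]

private lemma map_lift {α β : Type*} [DecidableEq α] [DecidableEq β] (f : α → β) :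
    ∀ (T : Multiset β) (R : Multiset α), T ≤ R.map f → ∃ B ≤ R, B.map f = T := by
  intro T
  induction T using Multiset.induction with
  | empty => exact fun R _ => ⟨0, by simp⟩
  | cons a T ih =>
    intro R h
    have ha : a ∈ R.map f := Multiset.mem_of_le h (Multiset.mem_cons_self a T)
    obtain ⟨r, hr, rfl⟩ := Multiset.mem_map.1 ha
    have h2 : T ≤ (R.map f).erase (f r) := by
      rw [← Multiset.cons_erase ha] at h
      exact (Multiset.cons_le_cons_iff (f r)).1 h
    have hmapeq : (R.erase r).map f = (R.map f).erase (f r) := by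
      conv_rhs => rw [← Multiset.cons_erase hr]
      simp
    obtain ⟨B, hBle, hBmap⟩ := ih (R.erase r) (by rw [hmapeq]; exact h2)
    refine ⟨r ::ₘ B, ?_, by simp [hBmap]⟩
    calc r ::ₘ B ≤ r ::ₘ R.erase r := (Multiset.cons_le_cons_iff _).2 hBle
    _ = R := Multiset.cons_erase hr

private lemma castHom_zero_iff (n j : ℕ) [NeZero n] [NeZero j] (hjn : j ∣ n) (x : ZMod n) :
    ZMod.castHom hjn (ZMod j) x = 0 ↔ (j : ℕ) ∣ x.val := by
  conv_lhs => rw [← ZMod.natCast_zmod_val x]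
  rw [map_natCast, ZMod.natCast_eq_zero_iff]

/-- Repeated EGZ: extract a zero-sum submultiset of size `k*m`. -/
private lemma multi_egz (m : ℕ) : ∀ (k : ℕ) (X : Multiset (ZMod m)),
    (k + 1) * m - 1 ≤ Multiset.card X → ∃ S ≤ X, Multiset.card S = k * m ∧ S.sum = 0 := by
  intro k
  induction k with
  | zero => exact fun X _ => ⟨0, by simp⟩
  | succ k ih =>
    intro X hX
    have e1 : (k + 1 + 1) * m = k * m + 2 * m := by ring
    have h1 : 2 * m - 1 ≤ Multiset.card X := by omega
    obtain ⟨B, hBle, hBcard, hBsum⟩ := ZMod.erdos_ginzburg_ziv_multiset X h1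
    have hcard2 : (k + 1) * m - 1 ≤ Multiset.card (X - B) := by
      rw [Multiset.card_sub hBle, hBcard]
      have e2 : (k + 1) * m = k * m + m := by ring
      omega
    obtain ⟨S, hSle, hScard, hSsum⟩ := ih (X - B) hcard2
    refine ⟨B + S, ?_, by rw [Multiset.card_add, hBcard, hScard]; ring,
      by rw [Multiset.sum_add, hBsum, hSsum, add_zero]⟩
    calc B + S ≤ B + (X - B) := add_le_add le_rfl hSle
    _ = X := by rw [add_comm]; exact tsub_add_cancel_of_le hBle

/-- Strip `b` blocks of size `j`, each with sum divisible by `j`. -/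
private lemma strip (n j : ℕ) (hn : 0 < n) (hj : 0 < j) (hjn : j ∣ n) :
    ∀ (b : ℕ) (R : Multiset (ZMod n)), b * j + (j - 1) ≤ Multiset.card R →
    ∃ M : Multiset (Multiset (ZMod n)), Multiset.card M = b ∧ M.sum ≤ R ∧
      ∀ B ∈ M, Multiset.card B = j ∧ j ∣ (B.sum).val := by
  haveI : NeZero j := ⟨hj.ne'⟩
  haveI : NeZero n := ⟨hn.ne'⟩
  intro b
  induction b with
  | zero => exact fun R _ => ⟨0, by simp⟩
  | succ b ih =>
    intro R hR
    have h1 : 2 * j - 1 ≤ Multiset.card (R.map (ZMod.castHom hjn (ZMod j))) := by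
      rw [Multiset.card_map]
      have : (b + 1) * j = b * j + j := by ring
      omega
    obtain ⟨T, hTle, hTcard, hTsum⟩ := ZMod.erdos_ginzburg_ziv_multiset _ h1
    obtain ⟨B, hBle, hBmap⟩ := map_lift _ T R hTle
    have hBcard : Multiset.card B = j := by rw [← hTcard, ← hBmap, Multiset.card_map]
    have hBdvd : j ∣ (B.sum).val := by
      rw [← castHom_zero_iff n j hjn]
      rw [map_multiset_sum, hBmap, hTsum]
    obtain ⟨M, hMcard, hMle, hMprop⟩ := ih (R - B) (by
      rw [Multiset.card_sub hBle, hBcard]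
      have : (b + 1) * j = b * j + j := by ring
      omega)
    refine ⟨B ::ₘ M, by simp [hMcard], ?_, ?_⟩
    · rw [Multiset.sum_cons]
      calc B + M.sum ≤ B + (R - B) := add_le_add le_rfl hMle
      _ = R := by rw [add_comm]; exact tsub_add_cancel_of_le hBle
    · intro C hC
      rcases Multiset.mem_cons.1 hC with rfl | hC
      · exact ⟨hBcard, hBdvd⟩
      · exact hMprop C hC

/-- Key combination: from a zero-sum multiset of size exactly `((k+1)*q - 1) * j`
with `n = j*q`, extract a zero-sum submultiset of size `k*n`. -/
private lemma combine (n j q k : ℕ) (hj : 0 < j) (hq : 0 < q) (hk : 1 ≤ k)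
    (hn : n = j * q) (R : Multiset (ZMod n))
    (hcard : Multiset.card R = ((k + 1) * q - 1) * j) (hsum : R.sum = 0) :
    ∃ S ≤ R, Multiset.card S = k * n ∧ S.sum = 0 := by
  haveI : NeZero j := ⟨hj.ne'⟩
  haveI : NeZero q := ⟨hq.ne'⟩
  have hn0 : 0 < n := by rw [hn]; positivity
  haveI : NeZero n := ⟨hn0.ne'⟩
  have hjn : j ∣ n := ⟨q, hn⟩
  have hb2 : 2 ≤ (k + 1) * q := by nlinarith
  obtain ⟨M, hMcard, hMle, hMprop⟩ := strip n j hn0 hj hjn ((k + 1) * q - 2) R (by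
    rw [hcard]
    have e1 : ((k+1)*q - 2) * j + 2 * j = (k+1)*q*j := by
      rw [← Nat.add_mul]; congr 1; omega
    have e2 : ((k+1)*q - 1) * j + 1 * j = (k+1)*q*j := by
      rw [← Nat.add_mul]; congr 1; omega
    omega)
  set R₀ := R - M.sum with hR₀
  have hMsumcard : Multiset.card M.sum = ((k + 1) * q - 2) * j := by
    rw [msum_card]
    have hrep : M.map Multiset.card = Multiset.replicate ((k+1)*q - 2) j := by
      rw [Multiset.eq_replicate]
      refine ⟨by rw [Multiset.card_map, hMcard], fun b hb => ?_⟩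
      obtain ⟨B, hB, rfl⟩ := Multiset.mem_map.1 hb
      exact (hMprop B hB).1
    rw [hrep, Multiset.sum_replicate, smul_eq_mul]
  have hReq : M.sum + R₀ = R := by rw [add_comm]; exact tsub_add_cancel_of_le hMle
  have hR₀card : Multiset.card R₀ = j := by
    have := congrArg Multiset.card hReq
    rw [Multiset.card_add, hMsumcard, hcard] at this
    have e1 : ((k+1)*q - 2) * j + 1 * j = ((k+1)*q - 1) * j := by
      rw [← Nat.add_mul]; congr 1; omega
    omega
  have hR₀dvd : j ∣ (R₀.sum).val := by
    rw [← castHom_zero_iff n j hjn]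
    have hsum2 : M.sum.sum + R₀.sum = 0 := by
      rw [← Multiset.sum_add, hReq, hsum]
    have hM0 : ZMod.castHom hjn (ZMod j) M.sum.sum = 0 := by
      rw [msum_sum, map_multiset_sum, Multiset.map_map]
      apply Multiset.sum_eq_zero
      intro x hx
      obtain ⟨B, hB, rfl⟩ := Multiset.mem_map.1 hx
      exact (castHom_zero_iff n j hjn B.sum).2 (hMprop B hB).2
    have := congrArg (ZMod.castHom hjn (ZMod j)) hsum2
    rw [map_add, hM0, zero_add, map_zero] at this
    exact this
  -- full block family
  set M' : Multiset (Multiset (ZMod n)) := R₀ ::ₘ M with hM'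
  have hM'card : Multiset.card M' = (k + 1) * q - 1 := by
    rw [hM', Multiset.card_cons, hMcard]; omega
  have hM'prop : ∀ B ∈ M', Multiset.card B = j ∧ j ∣ (B.sum).val := by
    intro B hB
    rcases Multiset.mem_cons.1 hB with rfl | hB
    · exact ⟨hR₀card, hR₀dvd⟩
    · exact hMprop B hB
  have hM'sum : M'.sum = R := by rw [hM', Multiset.sum_cons, add_comm, hReq]
  -- select k*q blocks via EGZ over ZMod q
  set gfun : Multiset (ZMod n) → ZMod q := fun B => (((B.sum).val / j : ℕ) : ZMod q) with hgfun
  obtain ⟨Sc, hScle, hSccard, hScsum⟩ := multi_egz q k (M'.map gfun)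
    (by rw [Multiset.card_map, hM'card])
  obtain ⟨N, hNle, hNmap⟩ := map_lift gfun Sc M' hScle
  have hNcard : Multiset.card N = k * q := by rw [← hSccard, ← hNmap, Multiset.card_map]
  refine ⟨N.sum, ?_, ?_, ?_⟩
  · rw [← hM'sum]
    exact (Multiset.le_iff_exists_add.1 hNle).elim (fun K hK => by
      rw [hK, Multiset.sum_add]; exact le_add_right (le_refl N.sum))
  · rw [msum_card]
    have hrep : N.map Multiset.card = Multiset.replicate (k * q) j := by
      rw [Multiset.eq_replicate]
      refine ⟨by rw [Multiset.card_map, hNcard], fun b hb => ?_⟩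
      obtain ⟨B, hB, rfl⟩ := Multiset.mem_map.1 hb
      exact (hM'prop B (Multiset.mem_of_le hNle hB)).1
    rw [hrep, Multiset.sum_replicate, smul_eq_mul, hn]
    ring
  · rw [msum_sum]
    have hmapeq : N.map Multiset.sum
        = N.map (fun B => ((j * ((B.sum).val / j) : ℕ) : ZMod n)) := by
      apply Multiset.map_congr rfl
      intro B hB
      rw [Nat.mul_div_cancel' (hM'prop B (Multiset.mem_of_le hNle hB)).2,
        ZMod.natCast_zmod_val]
    rw [hmapeq]
    have hc : (N.map (fun B => ((j * ((B.sum).val / j) : ℕ) : ZMod n))).sum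
        = (((N.map (fun B => j * ((B.sum).val / j))).sum : ℕ) : ZMod n) := by
      rw [Nat.cast_multiset_sum, Multiset.map_map]
      rfl
    rw [hc, ZMod.natCast_eq_zero_iff]
    have hq_dvd : q ∣ (N.map (fun B => (B.sum).val / j)).sum := by
      have : ((((N.map (fun B => (B.sum).val / j)).sum : ℕ)) : ZMod q) = 0 := by
        rw [Nat.cast_multiset_sum, Multiset.map_map]
        have : N.map ((fun x : ℕ => (x : ZMod q)) ∘ fun B => (B.sum).val / j)
            = N.map gfun := rfl
        rw [this, hNmap, hScsum]
      rwa [ZMod.natCast_eq_zero_iff] at this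
    have hfactor : (N.map (fun B => j * ((B.sum).val / j))).sum
        = j * (N.map (fun B => (B.sum).val / j)).sum := by
      rw [← Multiset.sum_map_mul_left]
    obtain ⟨c, hc'⟩ := hq_dvd
    exact ⟨c, by rw [hfactor, hc', hn]; ring⟩

/-- The extremal construction. -/
private lemma bad_sequence (n t ℓ : ℕ) (hn : 0 < n) (ht : 1 ≤ t)
    (hℓ : IsLeast {m : ℕ | 0 < m ∧ ¬ m ∣ n} ℓ) :
    ∃ J : Multiset (ZMod n), Multiset.card J = (t + 1) * n - ℓ ∧ J.sum = 0 ∧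
      ∀ S ≤ J, Multiset.card S = n * t → S.sum ≠ 0 := by
  obtain ⟨⟨hℓpos, hℓndvd⟩, hℓmin⟩ := hℓ
  have hℓ2 : 2 ≤ ℓ := by
    have h1 : ℓ ≠ 1 := fun h => hℓndvd (h ▸ one_dvd n)
    omega
  have hℓn1 : ℓ ≤ n + 1 := hℓmin ⟨Nat.succ_pos n, fun h => by
    have := Nat.le_of_dvd hn h; omega⟩
  set g := Nat.gcd ℓ n with hg
  have hg1 : 1 ≤ g := Nat.gcd_pos_of_pos_left n hℓpos
  have hgdvd : g ∣ n := Nat.gcd_dvd_right ℓ n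
  have hgℓ : g < ℓ := by
    rcases Nat.lt_or_ge g ℓ with h | h
    · exact h
    · have : g ≤ ℓ := Nat.le_of_dvd hℓpos (Nat.gcd_dvd_left ℓ n)
      have : g = ℓ := le_antisymm this h
      exact absurd (this ▸ hgdvd) hℓndvd
  set β : ZMod n := ((Nat.gcdA ℓ n : ℤ) : ZMod n) with hβdef
  have hβ : (ℓ : ZMod n) * β = (g : ZMod n) := by
    have h := Nat.gcd_eq_gcd_ab ℓ n
    have h2 := congrArg (fun z : ℤ => (z : ZMod n)) h
    push_cast at h2
    rw [ZMod.natCast_self, zero_mul, add_zero] at h2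
    exact h2.symm
  set x := n * t - g with hx
  set y := n + g - ℓ with hy
  have hnt : n ≤ n * t := Nat.le_mul_of_pos_right n ht
  have hgnt : g ≤ n * t := by omega
  have hyn : ℓ ≤ n + g := by omega
  refine ⟨Multiset.replicate x (β - 1) + Multiset.replicate y β, ?_, ?_, ?_⟩
  · rw [Multiset.card_add, Multiset.card_replicate, Multiset.card_replicate]
    have : (t + 1) * n = n * t + n := by ring
    omega
  · rw [Multiset.sum_add, Multiset.sum_replicate, Multiset.sum_replicate,
      nsmul_eq_mul, nsmul_eq_mul]
    have hxc : (x : ZMod n) = -(g : ZMod n) := by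
      have h0 : ((x + g : ℕ) : ZMod n) = 0 := by
        have hxg : x + g = n * t := by omega
        rw [hxg, Nat.cast_mul, ZMod.natCast_self, zero_mul]
      push_cast at h0
      linear_combination h0
    have hyc : (y : ZMod n) = (g : ZMod n) - (ℓ : ZMod n) := by
      have h0 : ((y + ℓ : ℕ) : ZMod n) = ((g : ℕ) : ZMod n) := by
        have hyg : y + ℓ = n + g := by omega
        rw [hyg, Nat.cast_add, ZMod.natCast_self, zero_add]
      push_cast at h0
      linear_combination h0
    rw [hxc, hyc]
    linear_combination -hβ
  · intro S hSle hScard hSsum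
    -- the case ℓ = n + 1 is impossible by cardinality
    have hcardJ : Multiset.card (Multiset.replicate x (β - 1) + Multiset.replicate y β)
        = x + y := by
      rw [Multiset.card_add, Multiset.card_replicate, Multiset.card_replicate]
    have hSJ : Multiset.card S ≤ x + y := by
      rw [← hcardJ]; exact Multiset.card_le_card hSle
    have hℓle : ℓ ≤ n := by
      by_contra h
      have : x + y ≤ n * t - 1 := by omega
      omega
    have hy1 : 1 ≤ y := by omega
    have hn2 : 2 ≤ n := by omega
    have hαβ : β - 1 ≠ β := by
      intro h
      have h1 : (1 : ZMod n) = 0 := by linear_combination -h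
      have : ((1 : ℕ) : ZMod n) = 0 := by push_cast; exact h1
      rw [ZMod.natCast_eq_zero_iff] at this
      have := Nat.le_of_dvd one_pos this
      omega
    set u := S.count (β - 1) with hu
    set v := S.count β with hv
    have hux : u ≤ x := by
      have h1 := Multiset.count_le_of_le (β - 1) hSle
      rwa [Multiset.count_add, Multiset.count_replicate_self,
        Multiset.count_replicate, if_neg (Ne.symm hαβ), add_zero] at h1
    have hvy : v ≤ y := by
      have h1 := Multiset.count_le_of_le β hSle
      rwa [Multiset.count_add, Multiset.count_replicate_self,
        Multiset.count_replicate, if_neg hαβ, zero_add] at h1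
    have hSeq : S = Multiset.replicate u (β - 1) + Multiset.replicate v β := by
      ext z
      rw [Multiset.count_add, Multiset.count_replicate, Multiset.count_replicate]
      by_cases hz1 : z = β - 1
      · subst hz1
        rw [if_pos rfl, if_neg (Ne.symm hαβ), add_zero, hu]
      · by_cases hz2 : z = β
        · subst hz2
          rw [if_neg hαβ, if_pos rfl, zero_add, hv]
        · rw [if_neg (fun h => hz1 h.symm), if_neg (fun h => hz2 h.symm), add_zero]
          apply Multiset.count_eq_zero_of_notMem
          intro hzS
          have hzJ := Multiset.mem_of_le hSle hzS
          rcases Multiset.mem_add.1 hzJ with h | h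
          · exact hz1 (Multiset.eq_of_mem_replicate h)
          · exact hz2 (Multiset.eq_of_mem_replicate h)
    have huv : u + v = n * t := by
      have := congrArg Multiset.card hSeq
      rw [hScard, Multiset.card_add, Multiset.card_replicate,
        Multiset.card_replicate] at this
      omega
    have hsum2 : (u : ZMod n) * (β - 1) + (v : ZMod n) * β = 0 := by
      rw [hSeq, Multiset.sum_add, Multiset.sum_replicate, Multiset.sum_replicate,
        nsmul_eq_mul, nsmul_eq_mul] at hSsum
      exact hSsum
    have huv0 : (u : ZMod n) + (v : ZMod n) = 0 := by
      have : ((u + v : ℕ) : ZMod n) = 0 := by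
        rw [huv, Nat.cast_mul, ZMod.natCast_self, zero_mul]
      push_cast at this
      exact this
    have hv0 : (v : ZMod n) = 0 := by linear_combination hsum2 - (β - 1) * huv0
    have : ((v : ℕ) : ZMod n) = 0 := hv0
    rw [ZMod.natCast_eq_zero_iff] at this
    have hvg : g ≤ v := by omega
    have : n ≤ v := Nat.le_of_dvd (by omega) this
    omega

theorem modified_egz_cyclic (n t ℓ : ℕ) (hn : 0 < n) (ht : 1 ≤ t)
    (hℓ : IsLeast {m : ℕ | 0 < m ∧ ¬ m ∣ n} ℓ) :
    IsLeast {L : ℕ | ∀ J : Multiset (ZMod n), L ≤ Multiset.card J → J.sum = 0 →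
        ∃ S ≤ J, Multiset.card S = n * t ∧ S.sum = 0}
      ((t + 1) * n - ℓ + 1) := by
  obtain ⟨⟨hℓpos, hℓndvd⟩, hℓmin⟩ := hℓ
  have hℓ2 : 2 ≤ ℓ := by
    have h1 : ℓ ≠ 1 := fun h => hℓndvd (h ▸ one_dvd n)
    omega
  have hℓn1 : ℓ ≤ n + 1 := hℓmin ⟨Nat.succ_pos n, fun h => by
    have := Nat.le_of_dvd hn h; omega⟩
  have hdvd_lt : ∀ m, 0 < m → m < ℓ → m ∣ n := by
    intro m hm hmℓ
    by_contra h
    exact absurd (hℓmin ⟨hm, h⟩) (by omega)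
  have hmul : (t + 1) * n = n * t + n := by ring
  constructor
  · -- upper bound: membership
    intro J hJcard hJsum
    by_cases hA : (t + 1) * n - 1 ≤ Multiset.card J
    · obtain ⟨S, h1, h2, h3⟩ := multi_egz n t J hA
      exact ⟨S, h1, by rw [h2]; ring, h3⟩
    · push_neg at hA
      set j := (t + 1) * n - Multiset.card J with hj
      have hj2 : 2 ≤ j := by omega
      have hjℓ : j < ℓ := by omega
      have hjdvd : j ∣ n := hdvd_lt j (by omega) hjℓ
      set q := n / j with hq
      have hn_eq : n = j * q := (Nat.mul_div_cancel' hjdvd).symm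
      have hq0 : 0 < q := by
        rcases Nat.eq_zero_or_pos q with h | h
        · rw [h, mul_zero] at hn_eq; omega
        · exact h
      have hjn : j ≤ n := Nat.le_of_dvd hn hjdvd
      have hcard_eq : Multiset.card J = ((t + 1) * q - 1) * j := by
        have e1 : ((t + 1) * q - 1) * j + 1 * j = (t + 1) * q * j := by
          rw [← Nat.add_mul]
          congr 1
          have : 0 < (t + 1) * q := by positivity
          omega
        have e2 : (t + 1) * q * j = (t + 1) * n := by rw [hn_eq]; ring
        omega
      obtain ⟨S, h1, h2, h3⟩ := combine n j q t (by omega) hq0 ht hn_eq J hcard_eq hJsum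
      exact ⟨S, h1, by rw [h2]; ring, h3⟩
  · -- lower bound
    intro L hL
    by_contra hcon
    push_neg at hcon
    obtain ⟨J, hJcard, hJsum, hJbad⟩ := bad_sequence n t ℓ hn ht ⟨⟨hℓpos, hℓndvd⟩, hℓmin⟩
    obtain ⟨S, hSle, hScard, hSsum⟩ := hL J (by omega) hJsum
    exact hJbad S hSle hScard hSsum
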